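/- Let d = 2n and let M be a d×d matrix with integer entries whose real version is symmetric and positive definite, and suppose u₁, …, u_d is an orthonormal basis of ℝ^d with M·u_i = ρ_i·u_i, where every ρ_i > 0. Let S = { i : ρ_i < 1 } be the set of contracting directions, and assume that for every i ∈ S and every nonzero k ∈ ℤ^d one has k·u_i ≠ 0. Then for all trigonometric polynomials f, g : ℝ^d → ℂ (finite sums Σ_{k ∈ S'} c_k·exp(2πi k·x) over finite sets S' ⊂ ℤ^d) there exists a constant K ≥ 0 such that for every r ≥ 0, the correlation function C_r(f, g*) = ∫_{[0,1]^d} f(M^r x)·conj(g(x)) dx − (∫_{[0,1]^d} f dx)·conj(∫_{[0,1]^d} g dx) satisfies |C_r(f, g*)| ≤ K·(∏_{i ∈ S} ρ_i)^r = K·exp(−r·S_KS), where S_KS = Σ_{i ∈ S} log(1/ρ_i) = Σ_{i : ρ_i > 1} log ρ_i is the Kolmogorov–Sinai entropy. Hence the lattice of coupled Arnol'd cat maps is exponentially mixing with mixing time 1/S_KS. -/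

import Mathlib

open Matrix MeasureTheory

lemma oneD (m : ℤ) :
    ∫ y in Set.Icc (0:ℝ) 1, Complex.exp (2*Real.pi*Complex.I*(m:ℂ)*(y:ℂ))
      = if m = 0 then 1 else 0 := by
  by_cases hm : m = 0
  · simp [hm, Real.volume_Icc]
  · rw [if_neg hm, integral_Icc_eq_integral_Ioc,
      ← intervalIntegral.integral_of_le (zero_le_one)]
    have hc : (2*Real.pi*Complex.I*(m:ℂ)) ≠ 0 := by
      simp [Real.pi_ne_zero, Complex.I_ne_zero, hm]
    rw [integral_exp_mul_complex hc]
    have h1 : (2*Real.pi*Complex.I*(m:ℂ)) * ((1:ℝ):ℂ) = (m:ℂ) * (2*(Real.pi:ℂ)*Complex.I) := by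
      push_cast; ring
    have h0 : (2*Real.pi*Complex.I*(m:ℂ)) * ((0:ℝ):ℂ) = 0 := by push_cast; ring
    rw [h1, h0, Complex.exp_int_mul_two_pi_mul_I, Complex.exp_zero, sub_self, zero_div]

lemma boxProd {ι : Type*} [Fintype ι] (g : ι → ℝ → ℂ) :
    ∫ x : ι → ℝ in Set.Icc 0 1, ∏ i, g i (x i)
      = ∏ i, ∫ y in Set.Icc (0:ℝ) 1, g i y := by
  rw [← MeasureTheory.integral_indicator measurableSet_Icc]
  have key : (Set.Icc (0:ι→ℝ) 1).indicator (fun x => ∏ i, g i (x i))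
      = fun x => ∏ i, (Set.Icc (0:ℝ) 1).indicator (g i) (x i) := by
    funext x
    by_cases hx : x ∈ Set.Icc (0:ι→ℝ) 1
    · rw [Set.indicator_of_mem hx]
      refine Finset.prod_congr rfl fun i _ => ?_
      have : x i ∈ Set.Icc (0:ℝ) 1 := ⟨hx.1 i, hx.2 i⟩
      rw [Set.indicator_of_mem this]
    · rw [Set.indicator_of_notMem hx]
      have : ∃ i, x i ∉ Set.Icc (0:ℝ) 1 := by
        by_contra h
        push_neg at h
        exact hx ⟨fun i => (h i).1, fun i => (h i).2⟩
      obtain ⟨i, hi⟩ := this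
      exact (Finset.prod_eq_zero (Finset.mem_univ i) (Set.indicator_of_notMem hi _)).symm
  have h := MeasureTheory.integral_fintype_prod_eq_prod (μ := fun _ => (volume : Measure ℝ))
    (fun i => (Set.Icc (0:ℝ) 1).indicator (g i))
  rw [← MeasureTheory.volume_pi] at h
  rw [key]
  refine h.trans ?_
  exact Finset.prod_congr rfl fun i _ => MeasureTheory.integral_indicator measurableSet_Icc

lemma boxExp {d : ℕ} (m : Fin d → ℤ) :
    ∫ x in Set.Icc (0 : Fin d → ℝ) 1,
        Complex.exp (2 * Real.pi * Complex.I * ((∑ t, (m t : ℝ) * x t : ℝ) : ℂ))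
      = if m = 0 then 1 else 0 := by
  have h1 : ∀ x : Fin d → ℝ,
      Complex.exp (2 * Real.pi * Complex.I * ((∑ t, (m t : ℝ) * x t : ℝ) : ℂ))
        = ∏ t, Complex.exp (2*Real.pi*Complex.I*((m t):ℂ)*((x t : ℝ):ℂ)) := by
    intro x
    rw [← Complex.exp_sum]
    congr 1
    push_cast
    rw [Finset.mul_sum]
    exact Finset.sum_congr rfl fun t _ => by ring
  simp_rw [h1]
  rw [boxProd (fun t y => Complex.exp (2*Real.pi*Complex.I*((m t):ℂ)*(y:ℂ)))]
  simp_rw [oneD]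
  by_cases hm : m = 0
  · simp [hm]
  · rw [if_neg hm]
    have : ∃ t, m t ≠ 0 := by
      by_contra h
      push_neg at h
      exact hm (funext h)
    obtain ⟨t, ht⟩ := this
    exact Finset.prod_eq_zero (Finset.mem_univ t) (if_neg ht)

/-- Exponential mixing of a lattice of coupled Arnol'd cat maps: let `M` be a
`2n×2n` integer matrix whose real version is symmetric positive definite, with an
orthonormal eigenbasis `u_i`, `M·u_i = ρ_i·u_i`, `ρ_i > 0`, such that for every
contracting direction (`ρ_i < 1`) and every nonzero integer vector `k` one has
`k·u_i ≠ 0`.  Then for trigonometric polynomials `f, g` the correlation function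
`C_r(f, g*) = ∫ f(M^r x)·conj(g(x)) dx − (∫ f)·conj(∫ g)` satisfies
`|C_r(f, g*)| ≤ K·(∏_{ρ_i < 1} ρ_i)^r = K·exp(−r·S_KS)`, so the mixing time is
`1/S_KS`, the inverse of the Kolmogorov–Sinai entropy. -/
theorem acm_lattice_exponential_mixing (n : ℕ)
    (M : Matrix (Fin (2 * n)) (Fin (2 * n)) ℤ)
    (hsymm : (M.map (Int.cast : ℤ → ℝ)).IsSymm)
    (hpos : (M.map (Int.cast : ℤ → ℝ)).PosDef)
    (u : Fin (2 * n) → Fin (2 * n) → ℝ) (ρ : Fin (2 * n) → ℝ)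
    (hortho : ∀ i j, (∑ t, u i t * u j t) = if i = j then (1 : ℝ) else 0)
    (heig : ∀ i, (M.map (Int.cast : ℤ → ℝ)).mulVec (u i) = ρ i • u i)
    (hρpos : ∀ i, 0 < ρ i)
    (hirr : ∀ i, ρ i < 1 → ∀ k : Fin (2 * n) → ℤ, k ≠ 0 →
      (∑ t, (k t : ℝ) * u i t) ≠ 0)
    (f g : (Fin (2 * n) → ℝ) → ℂ)
    (hf : ∃ (S : Finset (Fin (2 * n) → ℤ)) (c : (Fin (2 * n) → ℤ) → ℂ), ∀ x, f x =
      ∑ k ∈ S, c k * Complex.exp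
        (2 * Real.pi * Complex.I * ((∑ t, (k t : ℝ) * x t : ℝ) : ℂ)))
    (hg : ∃ (S : Finset (Fin (2 * n) → ℤ)) (c : (Fin (2 * n) → ℤ) → ℂ), ∀ x, g x =
      ∑ k ∈ S, c k * Complex.exp
        (2 * Real.pi * Complex.I * ((∑ t, (k t : ℝ) * x t : ℝ) : ℂ))) :
    ∃ K : ℝ, 0 ≤ K ∧ ∀ r : ℕ,
      ‖(∫ x in Set.Icc (0 : Fin (2 * n) → ℝ) 1,
            f (((M.map (Int.cast : ℤ → ℝ)) ^ r).mulVec x) * (starRingEnd ℂ) (g x))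
          - (∫ x in Set.Icc (0 : Fin (2 * n) → ℝ) 1, f x) *
              (starRingEnd ℂ) (∫ x in Set.Icc (0 : Fin (2 * n) → ℝ) 1, g x)‖
        ≤ K * (∏ i ∈ Finset.univ.filter (fun i => ρ i < 1), ρ i) ^ r := by
  classical
  obtain ⟨Sf, c, hfe⟩ := hf
  obtain ⟨Sg, dc, hge⟩ := hg
  set A : Matrix (Fin (2*n)) (Fin (2*n)) ℝ := M.map (Int.cast : ℤ → ℝ) with hA
  -- powers commute with the cast
  have hAr : ∀ r : ℕ, A ^ r = (M ^ r).map (Int.cast : ℤ → ℝ) := by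
    intro r
    have h := map_pow ((Int.castRingHom ℝ).mapMatrix) M r
    simp only [RingHom.mapMatrix_apply] at h
    have h2 : (M ^ r).map (Int.cast : ℤ → ℝ) = (M.map (Int.cast : ℤ → ℝ)) ^ r := by
      simpa [Int.coe_castRingHom] using h
    rw [hA, h2]
  -- cast of integer mulVec
  have hcastMV : ∀ (P : Matrix (Fin (2*n)) (Fin (2*n)) ℤ) (k : Fin (2*n) → ℤ),
      (P.map (Int.cast : ℤ → ℝ)).mulVec (fun s => ((k s : ℤ) : ℝ))
        = fun t => ((P.mulVec k t : ℤ) : ℝ) := by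
    intro P k
    funext t
    simp only [Matrix.mulVec, dotProduct, Matrix.map_apply]
    push_cast
    rfl
  -- frequency transport: k · (A^r x) = (M^r k) · x
  have hfreq : ∀ (r : ℕ) (k : Fin (2*n) → ℤ) (x : Fin (2*n) → ℝ),
      (∑ t, (k t : ℝ) * ((A ^ r).mulVec x) t)
        = ∑ t, (((M ^ r).mulVec k) t : ℝ) * x t := by
    intro r k x
    have hsr : (A ^ r)ᵀ = A ^ r := by
      rw [Matrix.transpose_pow, hsymm]
    calc (∑ t, (k t : ℝ) * ((A ^ r).mulVec x) t)
        = (fun s => ((k s : ℤ) : ℝ)) ⬝ᵥ ((A ^ r) *ᵥ x) := rfl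
      _ = ((fun s => ((k s : ℤ) : ℝ)) ᵥ* (A ^ r)) ⬝ᵥ x := by
          rw [Matrix.dotProduct_mulVec]
      _ = ((A ^ r) *ᵥ (fun s => ((k s : ℤ) : ℝ))) ⬝ᵥ x := by
          rw [← Matrix.mulVec_transpose, hsr]
      _ = ∑ t, (((M ^ r).mulVec k) t : ℝ) * x t := by
          rw [hAr r, hcastMV]
          rfl
  -- eigenvalue identity for powers
  have heigsum : ∀ (i : Fin (2*n)) (r : ℕ) (w : Fin (2*n) → ℝ),
      (∑ t, ((A ^ r).mulVec w) t * u i t) = ρ i ^ r * ∑ t, w t * u i t := by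
    intro i r
    induction r with
    | zero => intro w; simp [Matrix.one_mulVec]
    | succ r ih =>
        intro w
        rw [pow_succ, ← Matrix.mulVec_mulVec, ih (A.mulVec w)]
        have h1 : (∑ t, (A.mulVec w) t * u i t) = ρ i * ∑ t, w t * u i t := by
          calc (∑ t, (A.mulVec w) t * u i t)
              = (A *ᵥ w) ⬝ᵥ u i := rfl
            _ = u i ⬝ᵥ (A *ᵥ w) := dotProduct_comm _ _
            _ = (u i ᵥ* A) ⬝ᵥ w := Matrix.dotProduct_mulVec _ _ _
            _ = (Aᵀ *ᵥ u i) ⬝ᵥ w := by rw [Matrix.mulVec_transpose]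
            _ = (A *ᵥ u i) ⬝ᵥ w := by rw [hsymm]
            _ = (ρ i • u i) ⬝ᵥ w := by rw [heig i]
            _ = ρ i * (u i ⬝ᵥ w) := by rw [smul_dotProduct]; rfl
            _ = ρ i * ∑ t, w t * u i t := by rw [dotProduct_comm]; rfl
        rw [h1, pow_succ]
        ring
  -- notation for characters
  set E : (Fin (2*n) → ℤ) → (Fin (2*n) → ℝ) → ℂ := fun m x =>
    Complex.exp (2 * Real.pi * Complex.I * ((∑ t, (m t : ℝ) * x t : ℝ) : ℂ)) with hE
  have contE : ∀ m, Continuous (E m) := by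
    intro m
    apply Complex.continuous_exp.comp
    apply continuous_const.mul
    exact Complex.continuous_ofReal.comp
      (continuous_finset_sum _ fun t _ => continuous_const.mul (continuous_apply t))
  have intE : ∀ (m : Fin (2*n) → ℤ) (z : ℂ),
      IntegrableOn (fun x => z * E m x) (Set.Icc (0 : Fin (2*n) → ℝ) 1) := by
    intro m z
    exact ContinuousOn.integrableOn_compact isCompact_Icc
      (continuous_const.mul (contE m)).continuousOn
  -- conj of a character
  have hconjE : ∀ (m : Fin (2*n) → ℤ) (x : Fin (2*n) → ℝ),
      (starRingEnd ℂ) (E m x) = E (-m) x := by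
    intro m x
    rw [hE]
    simp only
    rw [← Complex.exp_conj]
    have hs : (∑ t, ((-m) t : ℝ) * x t) = -(∑ t, (m t : ℝ) * x t) := by
      rw [← Finset.sum_neg_distrib]
      exact Finset.sum_congr rfl fun t _ => by
        simp only [Pi.neg_apply, Int.cast_neg]
        ring
    rw [hs]
    congr 1
    simp only [_root_.map_mul, map_ofNat, Complex.conj_ofReal, Complex.conj_I,
      Complex.ofReal_neg]
    ring
  -- product of characters
  have hmulE : ∀ (a b : Fin (2*n) → ℤ) (x : Fin (2*n) → ℝ),
      E a x * E b x = E (a + b) x := by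
    intro a b x
    rw [hE]
    simp only
    rw [← Complex.exp_add]
    have hs : (∑ t, ((a+b) t : ℝ) * x t)
        = (∑ t, (a t : ℝ) * x t) + ∑ t, (b t : ℝ) * x t := by
      rw [← Finset.sum_add_distrib]
      exact Finset.sum_congr rfl fun t _ => by
        simp only [Pi.add_apply, Int.cast_add]
        ring
    rw [hs]
    push_cast
    ring
  -- value of the box integral of a character
  have hboxE : ∀ m : Fin (2*n) → ℤ,
      (∫ x in Set.Icc (0 : Fin (2*n) → ℝ) 1, E m x) = if m = 0 then 1 else 0 := by
    intro m
    rw [hE]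
    exact boxExp m
  -- integrals of f and g over the box
  have hIf : (∫ x in Set.Icc (0 : Fin (2*n) → ℝ) 1, f x)
      = ∑ k ∈ Sf, if k = 0 then c k else 0 := by
    simp only [hfe]
    rw [integral_finset_sum _ (fun k _ => intE k (c k))]
    refine Finset.sum_congr rfl fun k _ => ?_
    rw [MeasureTheory.integral_const_mul, hboxE k, mul_ite, mul_one, mul_zero]
  have hIg : (∫ x in Set.Icc (0 : Fin (2*n) → ℝ) 1, g x)
      = ∑ l ∈ Sg, if l = 0 then dc l else 0 := by
    simp only [hge]
    rw [integral_finset_sum _ (fun l _ => intE l (dc l))]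
    refine Finset.sum_congr rfl fun l _ => ?_
    rw [MeasureTheory.integral_const_mul, hboxE l, mul_ite, mul_one, mul_zero]
  -- correlation integral
  have hcorr : ∀ r : ℕ,
      (∫ x in Set.Icc (0 : Fin (2*n) → ℝ) 1,
          f ((A ^ r).mulVec x) * (starRingEnd ℂ) (g x))
        = ∑ k ∈ Sf, ∑ l ∈ Sg,
            if (M ^ r).mulVec k = l then c k * (starRingEnd ℂ) (dc l) else 0 := by
    intro r
    have hpt : ∀ x : Fin (2*n) → ℝ, f ((A ^ r).mulVec x) * (starRingEnd ℂ) (g x)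
        = ∑ k ∈ Sf, ∑ l ∈ Sg,
            (c k * (starRingEnd ℂ) (dc l)) * E ((M ^ r).mulVec k - l) x := by
      intro x
      have h1 : f ((A ^ r).mulVec x) = ∑ k ∈ Sf, c k * E ((M ^ r).mulVec k) x := by
        rw [hfe]
        refine Finset.sum_congr rfl fun k _ => ?_
        rw [hE]
        simp only
        rw [hfreq r k x]
      have h2 : (starRingEnd ℂ) (g x) = ∑ l ∈ Sg, (starRingEnd ℂ) (dc l) * E (-l) x := by
        rw [hge, map_sum]
        refine Finset.sum_congr rfl fun l _ => ?_
        rw [_root_.map_mul]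
        congr 1
        exact hconjE l x
      rw [h1, h2, Finset.sum_mul_sum]
      refine Finset.sum_congr rfl fun k _ => Finset.sum_congr rfl fun l _ => ?_
      rw [sub_eq_add_neg, ← hmulE ((M ^ r).mulVec k) (-l) x]
      ring
    simp only [hpt]
    rw [integral_finset_sum _ (fun k _ => integrable_finset_sum _ (fun l _ => intE _ _))]
    refine Finset.sum_congr rfl fun k _ => ?_
    rw [integral_finset_sum _ (fun l _ => intE _ _)]
    refine Finset.sum_congr rfl fun l _ => ?_
    rw [MeasureTheory.integral_const_mul, hboxE, mul_ite, mul_one, mul_zero]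
    simp only [sub_eq_zero]
  -- product of the means
  have hmeans : (∫ x in Set.Icc (0 : Fin (2*n) → ℝ) 1, f x) *
      (starRingEnd ℂ) (∫ x in Set.Icc (0 : Fin (2*n) → ℝ) 1, g x)
      = ∑ k ∈ Sf, ∑ l ∈ Sg,
          if k = 0 ∧ l = 0 then c k * (starRingEnd ℂ) (dc l) else 0 := by
    rw [hIf, hIg, map_sum, Finset.sum_mul_sum]
    refine Finset.sum_congr rfl fun k _ => Finset.sum_congr rfl fun l _ => ?_
    rw [apply_ite (starRingEnd ℂ), map_zero]
    by_cases hk : k = 0 <;> by_cases hl : l = 0 <;> simp [hk, hl]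
  -- the correlation function as a single sum
  have hdiff : ∀ r : ℕ,
      (∫ x in Set.Icc (0 : Fin (2*n) → ℝ) 1,
          f ((A ^ r).mulVec x) * (starRingEnd ℂ) (g x))
        - (∫ x in Set.Icc (0 : Fin (2*n) → ℝ) 1, f x) *
            (starRingEnd ℂ) (∫ x in Set.Icc (0 : Fin (2*n) → ℝ) 1, g x)
      = ∑ k ∈ Sf, ∑ l ∈ Sg,
          if ((M ^ r).mulVec k = l ∧ k ≠ 0) then c k * (starRingEnd ℂ) (dc l) else 0 := by
    intro r
    rw [hcorr r, hmeans, ← Finset.sum_sub_distrib]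
    refine Finset.sum_congr rfl fun k _ => ?_
    rw [← Finset.sum_sub_distrib]
    refine Finset.sum_congr rfl fun l _ => ?_
    by_cases hk : k = 0
    · subst hk
      by_cases hl : l = 0 <;> simp [hl, Matrix.mulVec_zero, eq_comm]
    · simp [hk]
  -- uniform bound on the sum
  have hbound : ∀ r : ℕ,
      ‖∑ k ∈ Sf, ∑ l ∈ Sg,
          if ((M ^ r).mulVec k = l ∧ k ≠ 0) then c k * (starRingEnd ℂ) (dc l) else 0‖
        ≤ ∑ k ∈ Sf, ∑ l ∈ Sg, ‖c k * (starRingEnd ℂ) (dc l)‖ := by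
    intro r
    refine le_trans (norm_sum_le _ _) (Finset.sum_le_sum fun k _ =>
      le_trans (norm_sum_le _ _) (Finset.sum_le_sum fun l _ => ?_))
    split_ifs with h
    · exact le_refl _
    · rw [norm_zero]
      exact norm_nonneg _
  set B : ℝ := ∑ k ∈ Sf, ∑ l ∈ Sg, ‖c k * (starRingEnd ℂ) (dc l)‖ with hB
  have hB0 : 0 ≤ B :=
    Finset.sum_nonneg fun _ _ => Finset.sum_nonneg fun _ _ => norm_nonneg _
  rcases Finset.eq_empty_or_nonempty (Finset.univ.filter (fun i => ρ i < 1)) with hFe | hFn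
  · -- no contracting directions
    refine ⟨B, hB0, fun r => ?_⟩
    rw [hdiff r, hFe, Finset.prod_empty, one_pow, mul_one]
    exact hbound r
  · -- there is a contracting direction
    obtain ⟨i0, hi0⟩ := hFn
    have hρ1 : ρ i0 < 1 := (Finset.mem_filter.mp hi0).2
    have huni : ∀ (k : Fin (2*n) → ℤ), k ≠ 0 → ∀ (l : Fin (2*n) → ℤ) (r s : ℕ),
        (M ^ r).mulVec k = l → (M ^ s).mulVec k = l → r = s := by
      intro k hk l r s hr hs
      have ha : (∑ t, (k t : ℝ) * u i0 t) ≠ 0 := hirr i0 hρ1 k hk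
      have key : ∀ q : ℕ, (M ^ q).mulVec k = l →
          ρ i0 ^ q * (∑ t, (k t : ℝ) * u i0 t) = ∑ t, (l t : ℝ) * u i0 t := by
        intro q hq
        have h := heigsum i0 q (fun s => ((k s : ℤ) : ℝ))
        rw [hAr q, hcastMV, hq] at h
        exact h.symm
      have h12 : ρ i0 ^ r * (∑ t, (k t : ℝ) * u i0 t)
          = ρ i0 ^ s * (∑ t, (k t : ℝ) * u i0 t) := (key r hr).trans (key s hs).symm
      have hpow : ρ i0 ^ r = ρ i0 ^ s := mul_right_cancel₀ ha h12
      exact (pow_right_strictAnti₀ (hρpos i0) hρ1).injective hpow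
    set Rset : Set ℕ := {r | ∃ k ∈ Sf, ∃ l ∈ Sg, k ≠ 0 ∧ (M ^ r).mulVec k = l} with hRset
    have hfin : Rset.Finite := by
      have hsub : Rset ⊆ ⋃ k ∈ (Sf : Set (Fin (2*n) → ℤ)), ⋃ l ∈ (Sg : Set (Fin (2*n) → ℤ)),
          {r : ℕ | k ≠ 0 ∧ (M ^ r).mulVec k = l} := by
        intro r hr
        obtain ⟨k, hkS, l, hlS, hk0, hkl⟩ := hr
        exact Set.mem_biUnion hkS (Set.mem_biUnion hlS ⟨hk0, hkl⟩)
      refine Set.Finite.subset (Set.Finite.biUnion Sf.finite_toSet fun k _ =>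
        Set.Finite.biUnion Sg.finite_toSet fun l _ => Set.Subsingleton.finite ?_) hsub
      intro r hr s hs
      exact huni k hr.1 l r s hr.2 hs.2
    obtain ⟨R, hR⟩ := hfin.bddAbove
    set p : ℝ := ∏ i ∈ Finset.univ.filter (fun i => ρ i < 1), ρ i with hp
    have hp0 : 0 < p := Finset.prod_pos fun i _ => hρpos i
    have hp1 : p ≤ 1 := Finset.prod_le_one (fun i _ => (hρpos i).le)
      (fun i hi => ((Finset.mem_filter.mp hi).2).le)
    refine ⟨B / p ^ R, div_nonneg hB0 (pow_pos hp0 R).le, fun r => ?_⟩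
    rw [hdiff r]
    by_cases hr : r ∈ Rset
    · have hrR : r ≤ R := hR hr
      rw [div_mul_eq_mul_div, le_div_iff₀ (pow_pos hp0 R)]
      exact le_trans (mul_le_mul_of_nonneg_right (hbound r) (pow_pos hp0 R).le)
        (mul_le_mul_of_nonneg_left (pow_le_pow_of_le_one hp0.le hp1 hrR) hB0)
    · have hT0 : (∑ k ∈ Sf, ∑ l ∈ Sg,
          if ((M ^ r).mulVec k = l ∧ k ≠ 0) then c k * (starRingEnd ℂ) (dc l) else 0)
          = 0 := by
        refine Finset.sum_eq_zero fun k hk => Finset.sum_eq_zero fun l hl => ?_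
        refine if_neg fun hcond => hr ?_
        exact ⟨k, hk, l, hl, hcond.2, hcond.1⟩
      rw [hT0, norm_zero]
      positivity
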